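/- With the notation for the Sierpiński triangle, the sets Δ^l, the triangle families τ_n^l, the level-approximations G_n^l(r), conductivities κ_n^l, and l,r-descendants as defined in the context: if f : Δ^l → ℝ is 1-Hölder-α, r ∉ f(𝐕), T is a triangle of G_n^l(r), and k ≥ 1, then the sum of κ_{n+k}^l(T') over all l,r-descendants T' ∈ τ_{n+k}^l of T is at least κ_n^l(T). -/

import Mathlib

open scoped Classical

noncomputable section

/-- The plane `ℝ²` with the Euclidean metric. -/
abbrev E2 := EuclideanSpace ℝ (Fin 2)

/-- The point `(x, y)` of the Euclidean plane. -/
def pt (x y : ℝ) : E2 := (WithLp.equiv 2 (Fin 2 → ℝ)).symm ![x, y]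

/-- The three vertices of an equilateral triangle of side length 1. -/
def vtx : Fin 3 → E2 := ![pt 0 0, pt 1 0, pt (1 / 2) (Real.sqrt 3 / 2)]

/-- The homothety of ratio 1/2 centered at the `i`-th vertex. -/
def hmap (i : Fin 3) : E2 → E2 := fun x => AffineMap.homothety (vtx i) (1 / 2 : ℝ) x

/-- Composition of the homotheties along a word; words of length `n` index the
triangles of `τ_n`. -/
def compMap : List (Fin 3) → E2 → E2
  | [], x => x
  | i :: ws, x => hmap i (compMap ws x)

/-- The initial closed equilateral triangle `Δ₀` of side length 1. -/
def Δ0 : Set E2 := convexHull ℝ (Set.range vtx)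

/-- `𝐕`: the set of all vertices of all triangles of all families `τ_n`. -/
def Vset : Set E2 := {x | ∃ ws : List (Fin 3), ∃ i : Fin 3, compMap ws (vtx i) = x}

/-- A word `w ∈ {0,1,2}^l` indexes a triangle of `τ_l` lying on the boundary of `Δ₀`
iff it uses at most two distinct letters. -/
def Boundary {l : ℕ} (w : Fin l → Fin 3) : Prop := ∃ a b : Fin 3, ∀ i, w i = a ∨ w i = b

/-- Boundary words of length `l`: the indices of the `3(2^l − 1)` similarities
defining `Δ^l`. -/
abbrev BWord (l : ℕ) := {w : Fin l → Fin 3 // Boundary w}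

instance (l : ℕ) : Inhabited (BWord l) := ⟨⟨fun _ => 0, ⟨0, 0, fun _ => Or.inl rfl⟩⟩⟩

/-- The similarity of `Δ^l` indexed by a boundary word. -/
def bmap {l : ℕ} (w : BWord l) : E2 → E2 := compMap (List.ofFn w.1)

/-- The composite similarity indexed by an address, i.e. a list of boundary words;
addresses of length `n` index the triangles of `τ_n^l`. -/
def addrMap {l : ℕ} : List (BWord l) → E2 → E2
  | [], x => x
  | w :: L, x => bmap w (addrMap L x)

/-- The `i`-th vertex of the triangle of `τ_n^l` with address `L` (`n = L.length`). -/
def triVtx {l : ℕ} (L : List (BWord l)) (i : Fin 3) : E2 := addrMap L (vtx i)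

/-- The self-similar set `Δ^l ⊆ Δ`. -/
def SierpL (l : ℕ) : Set E2 :=
  ⋂ n : ℕ, ⋃ (L : List (BWord l)) (_ : L.length = n), addrMap L '' Δ0

/-- The triangle with address `L` belongs to `G_n^l(r)` iff `r` lies in the interior
of the convex hull of the values of `f` on its vertices, i.e. iff some vertex value
is `< r` and some vertex value is `> r`. -/
def InG {l : ℕ} (f : E2 → ℝ) (r : ℝ) (L : List (BWord l)) : Prop :=
  (∃ i, f (triVtx L i) < r) ∧ (∃ j, r < f (triVtx L j))

/-- A selection of extreme vertices: for every triangle (address) `L`, `sel L` is a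
pair of distinct vertex indices at which `f` attains its minimum resp. maximum on
the vertex set (with ties broken by the designation). -/
def ValidSel {l : ℕ} (f : E2 → ℝ) (sel : List (BWord l) → Fin 3 × Fin 3) : Prop :=
  ∀ L : List (BWord l), (sel L).1 ≠ (sel L).2 ∧
    (∀ i, f (triVtx L (sel L).1) ≤ f (triVtx L i)) ∧
    (∀ i, f (triVtx L i) ≤ f (triVtx L (sel L).2))

/-- The child with address `L ++ [w]` is an extreme triangle of its parent `L` iff
it contains an extreme vertex of the parent. -/
def IsExtremeChild {l : ℕ} (sel : List (BWord l) → Fin 3 × Fin 3)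
    (L : List (BWord l)) (w : BWord l) : Prop :=
  ∃ j : Fin 3, (j = (sel L).1 ∨ j = (sel L).2) ∧
    ∃ i : Fin 3, triVtx (L ++ [w]) i = triVtx L j

/-- The conductivity `κ_n^l` of the triangle with address `L`: it starts at `1` for
`Δ₀` and is halved at every step of the address at which the triangle is not an
extreme triangle of its parent. -/
def kappa {l : ℕ} (sel : List (BWord l) → Fin 3 × Fin 3) (L : List (BWord l)) : ℝ :=
  (1 / 2 : ℝ) ^ ((Finset.range L.length).filter
    (fun m => ¬ IsExtremeChild sel (L.take m) (L.getI m))).card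

section Stmt2Aux
lemma hmap_apply (i : Fin 3) (x : E2) : hmap i x = (1/2 : ℝ) • (x - vtx i) + vtx i := by
  simp [hmap, AffineMap.homothety_apply]

def Q (a b : Fin 3) (l s : ℕ) : E2 := vtx a + ((s : ℝ) / 2 ^ l) • (vtx b - vtx a)

lemma Q_zero (a b : Fin 3) (l : ℕ) : Q a b l 0 = vtx a := by simp [Q]

lemma Q_last (a b : Fin 3) (l : ℕ) : Q a b l (2 ^ l) = vtx b := by
  have : ((2 ^ l : ℕ) : ℝ) / 2 ^ l = 1 := by
    push_cast
    field_simp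
  rw [Q, this, one_smul]
  abel

lemma hmap_Q_left (a b : Fin 3) (m s : ℕ) :
    hmap a (Q a b m s) = Q a b (m+1) s := by
  rw [hmap_apply, Q, Q]
  have h : (1/2 : ℝ) * ((s:ℝ) / 2 ^ m) = (s:ℝ) / 2 ^ (m+1) := by ring
  rw [show vtx a + ((s:ℝ) / 2 ^ m) • (vtx b - vtx a) - vtx a = ((s:ℝ)/2^m) • (vtx b - vtx a) by abel,
    smul_smul, h]
  abel

lemma hmap_Q_right (a b : Fin 3) (m s : ℕ) :
    hmap b (Q a b m s) = Q a b (m+1) (s + 2 ^ m) := by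
  rw [hmap_apply, Q, Q]
  have h1 : vtx a + ((s:ℝ) / 2 ^ m) • (vtx b - vtx a) - vtx b
      = ((s:ℝ)/2^m - 1) • (vtx b - vtx a) := by
    rw [sub_smul, one_smul]; abel
  rw [h1, smul_smul]
  have h2 : ((s + 2^m : ℕ) : ℝ) / 2 ^ (m+1) = 1/2 * ((s:ℝ)/2^m - 1) + 1 := by
    push_cast
    field_simp
    ring
  rw [h2, add_smul, one_smul]
  abel

/-- Binary word along the side from `a` to `b`. -/
def sideWord (a b : Fin 3) : (m : ℕ) → ℕ → List (Fin 3)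
  | 0, _ => []
  | m+1, s => if s < 2 ^ m then a :: sideWord a b m s else b :: sideWord a b m (s - 2 ^ m)

lemma sideWord_length (a b : Fin 3) (m s : ℕ) : (sideWord a b m s).length = m := by
  induction m generalizing s with
  | zero => rfl
  | succ m ih =>
    rw [sideWord]
    split <;> simp [ih]

lemma sideWord_mem (a b : Fin 3) (m s : ℕ) (c : Fin 3) (hc : c ∈ sideWord a b m s) :
    c = a ∨ c = b := by
  induction m generalizing s with
  | zero => simp [sideWord] at hc
  | succ m ih =>
    rw [sideWord] at hc
    split at hc <;> rcases List.mem_cons.1 hc with h | h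
    · exact Or.inl h
    · exact ih _ h
    · exact Or.inr h
    · exact ih _ h

lemma compMap_sideWord (a b : Fin 3) (m : ℕ) : ∀ s, s < 2 ^ m →
    compMap (sideWord a b m s) (vtx a) = Q a b m s ∧
    compMap (sideWord a b m s) (vtx b) = Q a b m (s + 1) := by
  induction m with
  | zero =>
    intro s hs
    interval_cases s
    constructor
    · rw [sideWord, compMap, ← Q_zero a b 0]
    · rw [sideWord, compMap]
      have := Q_last a b 0
      simpa using this.symm
  | succ m ih =>
    intro s hs
    rw [sideWord]
    by_cases h : s < 2 ^ m
    · rw [if_pos h]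
      obtain ⟨h1, h2⟩ := ih s h
      constructor
      · rw [compMap, h1, hmap_Q_left]
      · rw [compMap, h2, hmap_Q_left]
    · rw [if_neg h]
      push_neg at h
      have hlt : s - 2 ^ m < 2 ^ m := by
        have : s < 2 ^ m + 2 ^ m := by
          have := hs; rwa [pow_succ, mul_two] at this
        omega
      obtain ⟨h1, h2⟩ := ih (s - 2 ^ m) hlt
      have hsub : s - 2 ^ m + 2 ^ m = s := Nat.sub_add_cancel h
      constructor
      · rw [compMap, h1, hmap_Q_right, hsub]
      · have he : s - 2 ^ m + 1 + 2 ^ m = s + 1 := by omega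
        rw [compMap, h2, hmap_Q_right, he]

lemma compMap_append (u v : List (Fin 3)) (x : E2) :
    compMap (u ++ v) x = compMap u (compMap v x) := by
  induction u with
  | nil => rfl
  | cons a u ih => simp [compMap, ih]

def wordsOf {l : ℕ} (L : List (BWord l)) : List (Fin 3) :=
  (L.map (fun w => List.ofFn w.1)).flatten

lemma addrMap_eq_compMap {l : ℕ} (L : List (BWord l)) (x : E2) :
    addrMap L x = compMap (wordsOf L) x := by
  induction L with
  | nil => rfl
  | cons w L ih =>
    simp only [addrMap, wordsOf, List.map_cons, List.flatten_cons, compMap_append, ih, bmap]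

lemma addrMap_append {l : ℕ} (L M : List (BWord l)) (x : E2) :
    addrMap (L ++ M) x = addrMap L (addrMap M x) := by
  induction L with
  | nil => rfl
  | cons w L ih => simp [addrMap, ih]

lemma addrMap_compMap_mem_Vset {l : ℕ} (L : List (BWord l)) (u : List (Fin 3)) (i : Fin 3) :
    addrMap L (compMap u (vtx i)) ∈ Vset :=
  ⟨wordsOf L ++ u, i, by rw [compMap_append, ← addrMap_eq_compMap]⟩

lemma triVtx_mem_Vset {l : ℕ} (L : List (BWord l)) (i : Fin 3) : triVtx L i ∈ Vset :=
  addrMap_compMap_mem_Vset L [] i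

lemma addrMap_Q_mem_Vset {l : ℕ} (L : List (BWord l)) (a b : Fin 3) (s : ℕ)
    (hs : s ≤ 2 ^ l) : addrMap L (Q a b l s) ∈ Vset := by
  rcases eq_or_lt_of_le hs with h | h
  · rw [h, Q_last]
    exact addrMap_compMap_mem_Vset L [] b
  · rw [← (compMap_sideWord a b l s h).1]
    exact addrMap_compMap_mem_Vset L _ a

/-- The corner word. -/
def constW (l : ℕ) (j : Fin 3) : BWord l := ⟨fun _ => j, ⟨j, j, fun _ => Or.inl rfl⟩⟩

/-- The boundary word along side `a b` at position `s`. -/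
def sideW (a b : Fin 3) (l s : ℕ) : BWord l :=
  ⟨fun i => (sideWord a b l s).get (Fin.cast (sideWord_length a b l s).symm i),
   ⟨a, b, fun i => sideWord_mem a b l s _ (List.get_mem _ _)⟩⟩

lemma sideW_letters (a b : Fin 3) (l s : ℕ) (i : Fin l) :
    (sideW a b l s).1 i = a ∨ (sideW a b l s).1 i = b :=
  sideWord_mem a b l s _ (List.get_mem _ _)

lemma ofFn_sideW (a b : Fin 3) (l s : ℕ) :
    List.ofFn (sideW a b l s).1 = sideWord a b l s := by
  apply List.ext_getElem
  · simp [sideWord_length]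
  · intro i h1 h2
    simp [sideW]

lemma compMap_replicate (l : ℕ) (j : Fin 3) :
    compMap (List.replicate l j) (vtx j) = vtx j := by
  induction l with
  | zero => rfl
  | succ l ih =>
    rw [List.replicate_succ, compMap, ih, hmap_apply]
    simp

lemma triVtx_append_single {l : ℕ} (L : List (BWord l)) (w : BWord l) (i : Fin 3) :
    triVtx (L ++ [w]) i = addrMap L (compMap (List.ofFn w.1) (vtx i)) := by
  rw [triVtx, addrMap_append]; rfl

lemma triVtx_constW {l : ℕ} (L : List (BWord l)) (j : Fin 3) :
    triVtx (L ++ [constW l j]) j = triVtx L j := by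
  rw [triVtx_append_single, triVtx]
  congr 1
  rw [show List.ofFn (constW l j).1 = List.replicate l j by simp [constW],
    compMap_replicate]

lemma triVtx_sideW_left {l : ℕ} (L : List (BWord l)) (a b : Fin 3) (s : ℕ) (hs : s < 2 ^ l) :
    triVtx (L ++ [sideW a b l s]) a = addrMap L (Q a b l s) := by
  rw [triVtx_append_single, ofFn_sideW, (compMap_sideWord a b l s hs).1]

lemma triVtx_sideW_right {l : ℕ} (L : List (BWord l)) (a b : Fin 3) (s : ℕ) (hs : s < 2 ^ l) :
    triVtx (L ++ [sideW a b l s]) b = addrMap L (Q a b l (s + 1)) := by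
  rw [triVtx_append_single, ofFn_sideW, (compMap_sideWord a b l s hs).2]

lemma kappa_pos {l : ℕ} (sel : List (BWord l) → Fin 3 × Fin 3) (L : List (BWord l)) :
    0 < kappa sel L := pow_pos (by norm_num) _

lemma kappa_append_single {l : ℕ} (sel : List (BWord l) → Fin 3 × Fin 3)
    (L : List (BWord l)) (w : BWord l) :
    kappa sel (L ++ [w]) =
      if IsExtremeChild sel L w then kappa sel L else kappa sel L / 2 := by
  have hlen : (L ++ [w]).length = L.length + 1 := by simp
  have hfilter : ∀ m ∈ Finset.range L.length,
      ((¬ IsExtremeChild sel ((L ++ [w]).take m) ((L ++ [w]).getI m)) ↔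
       (¬ IsExtremeChild sel (L.take m) (L.getI m))) := by
    intro m hm
    rw [Finset.mem_range] at hm
    have h1 : (L ++ [w]).take m = L.take m :=
      List.take_append_of_le_length (le_of_lt hm)
    have h2 : (L ++ [w]).getI m = L.getI m := by
      rw [List.getI_eq_getElem _ (by simp; omega), List.getI_eq_getElem _ hm]
      exact List.getElem_append_left hm
    rw [h1, h2]
  have htake : (L ++ [w]).take L.length = L := by
    simpa using List.take_left L [w]
  have hgetI : (L ++ [w]).getI L.length = w := by
    rw [List.getI_eq_getElem _ (by simp)]
    simp
  rw [kappa, kappa, hlen, Finset.range_add_one, Finset.filter_insert, htake, hgetI]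
  by_cases hext : IsExtremeChild sel L w
  · rw [if_neg (by simpa using hext), if_pos hext]
    congr 2
    exact Finset.filter_congr hfilter
  · rw [if_pos (by simpa using hext), if_neg hext,
      Finset.card_insert_of_notMem (by simp)]
    rw [pow_succ]
    have : (Finset.filter (fun m => ¬IsExtremeChild sel ((L ++ [w]).take m) ((L ++ [w]).getI m))
        (Finset.range L.length)).card
        = (Finset.filter (fun m => ¬IsExtremeChild sel (L.take m) (L.getI m))
        (Finset.range L.length)).card := by
      congr 1
      exact Finset.filter_congr hfilter
    rw [this]
    ring

lemma crossing {r : ℝ} (F : ℕ → ℝ) : ∀ M : ℕ, F 0 < r → r < F M → (∀ s, s ≤ M → F s ≠ r) →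
    ∃ s, s < M ∧ ((F s < r ∧ r < F (s+1)) ∨ (F (s+1) < r ∧ r < F s)) := by
  intro M
  induction M with
  | zero => intro h0 hM _; exact absurd hM (by linarith)
  | succ M ih =>
    intro h0 hM hne
    rcases lt_or_gt_of_ne (hne M (by omega)) with h | h
    · exact ⟨M, by omega, Or.inl ⟨h, hM⟩⟩
    · obtain ⟨s, hs, hc⟩ := ih h0 h (fun s hs => hne s (by omega))
      exact ⟨s, by omega, hc⟩

lemma kappa_half_le {l : ℕ} (sel : List (BWord l) → Fin 3 × Fin 3)
    (L : List (BWord l)) (w : BWord l) :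
    kappa sel L / 2 ≤ kappa sel (L ++ [w]) := by
  rw [kappa_append_single]
  split
  · linarith [kappa_pos sel L]
  · exact le_rfl

lemma exists_third (j0 j1 : Fin 3) (h : j0 ≠ j1) : ∃ c : Fin 3, c ≠ j0 ∧ c ≠ j1 := by
  revert h; revert j0 j1; decide

lemma one_step {l : ℕ} (f : E2 → ℝ) (r : ℝ) (hr : r ∉ f '' Vset)
    (sel : List (BWord l) → Fin 3 × Fin 3) (hsel : ValidSel f sel)
    (L : List (BWord l)) (hL : InG f r L) :
    kappa sel L ≤ ∑ w : BWord l, (if InG f r (L ++ [w]) then kappa sel (L ++ [w]) else 0) := by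
  have hne : ∀ x ∈ Vset, f x ≠ r := fun x hx h => hr ⟨x, hx, h⟩
  set g : BWord l → ℝ := fun w => if InG f r (L ++ [w]) then kappa sel (L ++ [w]) else 0 with hg
  have hgnonneg : ∀ w ∈ Finset.univ, 0 ≤ g w := by
    intro w _
    simp only [hg]
    split
    · exact (kappa_pos sel _).le
    · exact le_rfl
  set j0 := (sel L).1 with hj0
  set j1 := (sel L).2 with hj1
  obtain ⟨hj01, hmin, hmax⟩ := hsel L
  have hv0 : f (triVtx L j0) < r := by
    obtain ⟨i, hi⟩ := hL.1
    exact lt_of_le_of_lt (hmin i) hi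
  have hv1 : r < f (triVtx L j1) := by
    obtain ⟨i, hi⟩ := hL.2
    exact lt_of_lt_of_le hi (hmax i)
  -- extreme corner children
  have hext : ∀ j : Fin 3, (j = j0 ∨ j = j1) → IsExtremeChild sel L (constW l j) := by
    intro j hj
    exact ⟨j, hj, j, triVtx_constW L j⟩
  -- Case A
  by_cases hA : InG f r (L ++ [constW l j0]) ∨ InG f r (L ++ [constW l j1])
  · obtain ⟨j, hj, hGj⟩ : ∃ j, (j = j0 ∨ j = j1) ∧ InG f r (L ++ [constW l j]) := by
      rcases hA with h | h
      · exact ⟨j0, Or.inl rfl, h⟩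
      · exact ⟨j1, Or.inr rfl, h⟩
    have hk : g (constW l j) = kappa sel L := by
      simp only [hg, if_pos hGj, kappa_append_single, if_pos (hext j hj)]
    calc kappa sel L = g (constW l j) := hk.symm
      _ ≤ ∑ w : BWord l, g w := Finset.single_le_sum hgnonneg (Finset.mem_univ _)
  · push_neg at hA
    obtain ⟨hB0, hB1⟩ := hA
    -- crossing on side (j0, j1)
    have hF0 : f (addrMap L (Q j0 j1 l 0)) < r := by rwa [Q_zero]
    have hFM : r < f (addrMap L (Q j0 j1 l (2 ^ l))) := by rwa [Q_last]
    have hFne : ∀ s, s ≤ 2 ^ l → f (addrMap L (Q j0 j1 l s)) ≠ r :=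
      fun s hs => hne _ (addrMap_Q_mem_Vset L j0 j1 s hs)
    obtain ⟨s1, hs1, hc1⟩ := crossing (fun s => f (addrMap L (Q j0 j1 l s))) (2 ^ l) hF0 hFM hFne
    set w1 := sideW j0 j1 l s1 with hw1
    have hG1 : InG f r (L ++ [w1]) := by
      have hva := triVtx_sideW_left L j0 j1 s1 hs1
      have hvb := triVtx_sideW_right L j0 j1 s1 hs1
      rcases hc1 with ⟨h1, h2⟩ | ⟨h1, h2⟩
      · exact ⟨⟨j0, by rwa [hva]⟩, ⟨j1, by rwa [hvb]⟩⟩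
      · exact ⟨⟨j1, by rwa [hvb]⟩, ⟨j0, by rwa [hva]⟩⟩
    have hw1c0 : w1 ≠ constW l j0 := by
      intro h; rw [h] at hG1; exact hB0 hG1
    have hw1c1 : w1 ≠ constW l j1 := by
      intro h; rw [h] at hG1; exact hB1 hG1
    obtain ⟨i0, hi0⟩ : ∃ i, w1.1 i = j0 := by
      by_contra hcon
      push_neg at hcon
      apply hw1c1
      apply Subtype.ext
      funext i
      rcases sideW_letters j0 j1 l s1 i with h | h
      · exact absurd h (hcon i)
      · exact h
    obtain ⟨i1, hi1⟩ : ∃ i, w1.1 i = j1 := by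
      by_contra hcon
      push_neg at hcon
      apply hw1c0
      apply Subtype.ext
      funext i
      rcases sideW_letters j0 j1 l s1 i with h | h
      · exact h
      · exact absurd h (hcon i)
    obtain ⟨j2, hj20, hj21⟩ := exists_third j0 j1 hj01
    have hv2 : f (triVtx L j2) ≠ r := hne _ (triVtx_mem_Vset L j2)
    -- second crossing child
    obtain ⟨w2, hG2, hne12⟩ : ∃ w2 : BWord l, InG f r (L ++ [w2]) ∧ w1 ≠ w2 := by
      rcases lt_or_gt_of_ne hv2 with hlt | hgt
      · -- side (j2, j1)
        have hF0' : f (addrMap L (Q j2 j1 l 0)) < r := by rwa [Q_zero]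
        have hFM' : r < f (addrMap L (Q j2 j1 l (2 ^ l))) := by rwa [Q_last]
        obtain ⟨s2, hs2, hc2⟩ := crossing (fun s => f (addrMap L (Q j2 j1 l s))) (2 ^ l) hF0' hFM'
          (fun s hs => hne _ (addrMap_Q_mem_Vset L j2 j1 s hs))
        refine ⟨sideW j2 j1 l s2, ?_, ?_⟩
        · have hva := triVtx_sideW_left L j2 j1 s2 hs2
          have hvb := triVtx_sideW_right L j2 j1 s2 hs2
          rcases hc2 with ⟨h1, h2⟩ | ⟨h1, h2⟩
          · exact ⟨⟨j2, by rwa [hva]⟩, ⟨j1, by rwa [hvb]⟩⟩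
          · exact ⟨⟨j1, by rwa [hvb]⟩, ⟨j2, by rwa [hva]⟩⟩
        · intro h
          have := sideW_letters j2 j1 l s2 i0
          rw [← h, hi0] at this
          rcases this with h' | h'
          · exact hj20 h'.symm
          · exact hj01 h'
      · -- side (j0, j2)
        have hF0' : f (addrMap L (Q j0 j2 l 0)) < r := by rwa [Q_zero]
        have hFM' : r < f (addrMap L (Q j0 j2 l (2 ^ l))) := by rwa [Q_last]
        obtain ⟨s2, hs2, hc2⟩ := crossing (fun s => f (addrMap L (Q j0 j2 l s))) (2 ^ l) hF0' hFM'
          (fun s hs => hne _ (addrMap_Q_mem_Vset L j0 j2 s hs))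
        refine ⟨sideW j0 j2 l s2, ?_, ?_⟩
        · have hva := triVtx_sideW_left L j0 j2 s2 hs2
          have hvb := triVtx_sideW_right L j0 j2 s2 hs2
          rcases hc2 with ⟨h1, h2⟩ | ⟨h1, h2⟩
          · exact ⟨⟨j0, by rwa [hva]⟩, ⟨j2, by rwa [hvb]⟩⟩
          · exact ⟨⟨j2, by rwa [hvb]⟩, ⟨j0, by rwa [hva]⟩⟩
        · intro h
          have := sideW_letters j0 j2 l s2 i1
          rw [← h, hi1] at this
          rcases this with h' | h'
          · exact hj01 h'.symm
          · exact hj21 h'.symm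
    have hsum : g w1 + g w2 ≤ ∑ w : BWord l, g w := by
      rw [← Finset.sum_pair hne12]
      exact Finset.sum_le_sum_of_subset_of_nonneg (Finset.subset_univ _)
        (fun w hw _ => hgnonneg w (Finset.mem_univ w))
    have h1 : kappa sel L / 2 ≤ g w1 := by
      rw [hg]; simp only [if_pos hG1]; exact kappa_half_le sel L w1
    have h2 : kappa sel L / 2 ≤ g w2 := by
      rw [hg]; simp only [if_pos hG2]; exact kappa_half_le sel L w2
    linarith

end Stmt2Aux

/-- **weak conservation of conductivity.** If `f : Δ^l → ℝ` is
1-Hölder-α, `r ∉ f(𝐕)`, the triangle with address `L` belongs to `G_n^l(r)`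
(`n = L.length`) and `k ≥ 1`, then the sum of the conductivities of the
`l,r`-descendants of `L` in `τ_{n+k}^l` is at least the conductivity of `L`.
Descendants at level `n + k` are indexed by the extensions `W : Fin k → BWord l`
whose intermediate addresses all stay in the sets `G_{n+m}^l(r)`. -/
theorem stmt2 {l : ℕ} (α : ℝ) (hα0 : 0 < α) (hα1 : α ≤ 1)
    (f : E2 → ℝ)
    (hf : ∀ x ∈ SierpL l, ∀ y ∈ SierpL l, |f x - f y| ≤ dist x y ^ α)
    (r : ℝ) (hr : r ∉ f '' Vset)
    (sel : List (BWord l) → Fin 3 × Fin 3) (hsel : ValidSel f sel)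
    (L : List (BWord l)) (hL : InG f r L)
    (k : ℕ) (hk : 1 ≤ k) :
    kappa sel L ≤
      ∑ W : Fin k → BWord l,
        (if ∀ m : ℕ, m ≤ k → InG f r (L ++ (List.ofFn W).take m)
         then kappa sel (L ++ List.ofFn W) else 0) := by
  clear hk hf hα0 hα1
  induction k generalizing L with
  | zero =>
    rw [Fintype.sum_unique]
    simp only [List.ofFn_zero, List.take_nil, List.append_nil]
    rw [if_pos (fun m _ => hL)]
  | succ k ih =>
    rw [← Equiv.sum_comp (Fin.consEquiv (fun _ : Fin (k+1) => BWord l)), Fintype.sum_prod_type]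
    simp only [Fin.consEquiv_apply, List.ofFn_succ, Fin.cons_zero, Fin.cons_succ]
    calc kappa sel L
        ≤ ∑ w : BWord l, (if InG f r (L ++ [w]) then kappa sel (L ++ [w]) else 0) :=
          one_step f r hr sel hsel L hL
      _ ≤ _ := by
          apply Finset.sum_le_sum
          intro w _
          by_cases hw : InG f r (L ++ [w])
          · rw [if_pos hw]
            refine le_trans (ih (L ++ [w]) hw) (le_of_eq (Finset.sum_congr rfl ?_))
            intro W' _
            have hval : (L ++ [w]) ++ List.ofFn W' = L ++ w :: List.ofFn W' := by simp
            have hiff : (∀ m : ℕ, m ≤ k → InG f r ((L ++ [w]) ++ (List.ofFn W').take m)) ↔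
                (∀ m : ℕ, m ≤ k + 1 → InG f r (L ++ (w :: List.ofFn W').take m)) := by
              have hstep : ∀ m : ℕ, L ++ (w :: List.ofFn W').take (m + 1)
                  = (L ++ [w]) ++ (List.ofFn W').take m := by
                intro m
                rw [List.take_succ_cons]
                simp
              constructor
              · intro h m hm
                match m with
                | 0 => simpa using hL
                | m + 1 =>
                  rw [hstep m]
                  exact h m (by omega)
              · intro h m hm
                have := h (m + 1) (by omega)
                rwa [hstep m] at this
            rw [hval]
            exact if_congr hiff rfl rfl
          · rw [if_neg hw]
            apply Finset.sum_nonneg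
            intro W' _
            split
            · exact (kappa_pos _ _).le
            · exact le_rfl

end
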